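/- For every n ≥ 3 and every alphabet Σ = {a_0, a_1, …, a_{n−1}} consisting of n pairwise distinct symbols, the ring distribution Δ = ({a_0, a_1}, {a_1, a_2}, …, {a_{n−2}, a_{n−1}}, {a_{n−1}, a_0}) of Σ has no reduction. -/

import Mathlib

/-- A *distribution* of the (finite) alphabet `α`: a family of non-empty,
pairwise incomparable (under set inclusion) sub-alphabets whose union is `α`.
Its size is `comps.ncard`. -/
structure Distr (α : Type) [Fintype α] where
  comps : Set (Set α)
  comps_nonempty : ∀ S ∈ comps, S.Nonempty
  comps_cover : ∀ a : α, ∃ S ∈ comps, a ∈ S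
  comps_incomp : ∀ S ∈ comps, ∀ T ∈ comps, S ≠ T → ¬ S ⊆ T

section Defs

variable {α : Type} [Fintype α]

/-- Natural projection `P_{Σ'}`: erase from a string all symbols not in `S`. -/
noncomputable def projA (S : Set α) (s : List α) : List α :=
  s.filter fun a => @decide (a ∈ S) (Classical.propDecidable _)

/-- `L` is decomposable with respect to `Δ`:
`L = ∥_i P_{Σ_i}(L) = ⋂_i P_{Σ_i}⁻¹(P_{Σ_i}(L))`. -/
def Decomposable (L : Set (List α)) (Δ : Distr α) : Prop :=
  L = ⋂ S ∈ Δ.comps, projA S ⁻¹' (projA S '' L)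

/-- The partial order `≤_Σ` on distributions: every component of `Δ` is
contained in some component of `Δ'`. -/
def DistLE (Δ Δ' : Distr α) : Prop :=
  ∀ S ∈ Δ.comps, ∃ T ∈ Δ'.comps, S ⊆ T

/-- `P` is a *reduction* of `Δ`. -/
def IsReduction (P : Set (Distr α)) (Δ : Distr α) : Prop :=
  2 ≤ P.ncard ∧
  (∀ Δ' ∈ P, Δ'.comps.ncard < Δ.comps.ncard) ∧
  (∀ L : Set (List α), Decomposable L Δ ↔ ∀ Δ' ∈ P, Decomposable L Δ')

/-- The maximal members (under set inclusion) of a family of sets. -/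
def MaximalMem {β : Type} (F : Set (Set β)) : Set (Set β) :=
  {S | S ∈ F ∧ ∀ T ∈ F, S ⊆ T → S = T}

/-- The dependence relation `D_Δ`. -/
def DepRel (Δ : Distr α) : Set (α × α) :=
  {p | ∃ S ∈ Δ.comps, p.1 ∈ S ∧ p.2 ∈ S}

/-- The independence relation `I_Δ = Σ × Σ − D_Δ`. -/
def IndepRel (Δ : Distr α) : Set (α × α) :=
  {p | ¬ ∃ S ∈ Δ.comps, p.1 ∈ S ∧ p.2 ∈ S}

/-- `Σ' ⊑ Δ`: `Σ'` is contained in some component of `Δ`. -/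
def SqSub (S : Set α) (Δ : Distr α) : Prop :=
  ∃ T ∈ Δ.comps, S ⊆ T

/-- `Δ` is the greatest lower bound of the family `D` with respect to `≤_Σ`. -/
def IsGLBFam {l : ℕ} (D : Fin l → Distr α) (Δ : Distr α) : Prop :=
  (∀ i, DistLE Δ (D i)) ∧
  ∀ Δ''' : Distr α, (∀ i, DistLE Δ''' (D i)) → DistLE Δ''' Δ

/-- `Δ'` is *merged* from `Δ`: `Δ' ≠ (Σ)` and `Δ'` is obtained from a
partition of the components of `Δ` having at least one block of size ≥ 2 by
taking the unions over the blocks and keeping only the maximal resulting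
sub-alphabets. -/
def MergedFrom (Δ' Δ : Distr α) : Prop :=
  Δ'.comps ≠ {Set.univ} ∧
  ∃ part : Set (Set (Set α)),
    (∀ B ∈ part, B.Nonempty) ∧
    (∀ B ∈ part, B ⊆ Δ.comps) ∧
    (∀ B ∈ part, ∀ C ∈ part, B ≠ C → Disjoint B C) ∧
    (∀ S ∈ Δ.comps, ∃ B ∈ part, S ∈ B) ∧
    (∃ B ∈ part, ∃ S ∈ B, ∃ T ∈ B, S ≠ T) ∧
    Δ'.comps = MaximalMem {U : Set α | ∃ B ∈ part, U = ⋃₀ B}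

/-- Membership in the search space `S_Δ`: a set of distributions merged from
`Δ` that are pairwise `≤_Σ`-incomparable. -/
def MemS (Δ : Distr α) (P : Set (Distr α)) : Prop :=
  (∀ Δ' ∈ P, MergedFrom Δ' Δ) ∧
  ∀ Δ₁ ∈ P, ∀ Δ₂ ∈ P, Δ₁ ≠ Δ₂ → ¬ DistLE Δ₁ Δ₂

/-- The ordering `≤_Δ` on sets of distributions: every member of `Q` has a
member of `P` below it with respect to `≤_Σ`. -/
def SetLE (P Q : Set (Distr α)) : Prop :=
  ∀ Δ' ∈ Q, ∃ Δ'' ∈ P, DistLE Δ'' Δ'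

/-- `[F]`: the `≤_Σ`-minimal members of a set of distributions. -/
def MinimalD (F : Set (Distr α)) : Set (Distr α) :=
  {Δ' | Δ' ∈ F ∧ ∀ Δ'' ∈ F, DistLE Δ'' Δ' → DistLE Δ' Δ''}

/-- `Δ'` is obtained from `Δ` by merging exactly two components `S ≠ T`
(and keeping only the maximal sub-alphabets); the members of `⊥(Δ)`. -/
def MinMergedFrom (Δ' Δ : Distr α) : Prop :=
  ∃ S ∈ Δ.comps, ∃ T ∈ Δ.comps, S ≠ T ∧
    Δ'.comps = MaximalMem ((Δ.comps \ {S, T}) ∪ {S ∪ T})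

/-- The set `A(Δ)` of shared symbols of a distribution. -/
def SharedSyms (Δ : Distr α) : Set α :=
  {a | ∃ S ∈ Δ.comps, ∃ T ∈ Δ.comps, S ≠ T ∧ a ∈ S ∧ a ∈ T}

/-- The substitution of `Δ'` into the component `C` of `Δ''` yields `Δs`:
`Δs` is obtained from the components of `Δ''` other than `C` together with the
intersections `C ∩ S` for components `S` of `Δ'`, keeping only the maximal
non-empty members. -/
def SubstResult (Δ' Δ'' : Distr α) (C : Set α) (Δs : Distr α) : Prop :=
  Δs.comps =
    MaximalMem {T : Set α |
      T.Nonempty ∧ (T ∈ Δ''.comps \ {C} ∨ ∃ S ∈ Δ'.comps, T = C ∩ S)}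

/-- One swap of two adjacent symbols forming a pair in `I`. -/
def SwapStep (I : Set (α × α)) (s t : List α) : Prop :=
  ∃ (u v : List α) (a b : α),
    (a, b) ∈ I ∧ s = u ++ a :: b :: v ∧ t = u ++ b :: a :: v

/-- Trace equivalence with respect to `I`: a finite sequence of swaps of
adjacent independent symbols. -/
def TraceEquiv (I : Set (α × α)) : List α → List α → Prop :=
  Relation.ReflTransGen (SwapStep I)

/-- `L` is trace-closed with respect to `I`. -/
def TraceClosed (I : Set (α × α)) (L : Set (List α)) : Prop :=
  L = {t | ∃ s ∈ L, TraceEquiv I s t}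

/-- The map `N` determined by the enumeration `c` of the components of a
distribution: `N(a) = {i : a ∉ Σ_i}`. -/
def Nmap {n : ℕ} (c : Fin n → Set α) (a : α) : Set (Fin n) :=
  {i | a ∉ c i}

/-- A simple path from `x` to `y` in the graph `(Σ, D)`: a list of pairwise
distinct symbols, starting at `x`, ending at `y`, with consecutive symbols
related by `D`. -/
def IsSimplePath (D : Set (α × α)) (p : List α) (x y : α) : Prop :=
  p.Nodup ∧ p.head? = some x ∧ p.getLast? = some y ∧
    p.Chain' (fun a b => (a, b) ∈ D)

/-- `Cr_D(S, y)` (with `N` given by the enumeration `c`): the set of indices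
`i` such that some simple path `p` from some `x ∈ S` to `y` in `(Σ, D)`
satisfies `i ∈ ⋂_{a ∈ p.dropLast} N(a)`. -/
def CrSet {n : ℕ} (c : Fin n → Set α) (D : Set (α × α)) (S : Set α) (y : α) :
    Set (Fin n) :=
  {i | ∃ x ∈ S, ∃ p : List α,
    IsSimplePath D p x y ∧ ∀ a ∈ p.dropLast, i ∈ Nmap c a}

/-- The smallest set of distributions containing `Q` and closed under
substitution. -/
inductive SubstClosure (Q : Set (Distr α)) : Distr α → Prop
  | base (Δ' : Distr α) (h : Δ' ∈ Q) : SubstClosure Q Δ'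
  | step (Δ' Δ'' Δs : Distr α) (C : Set α)
      (h1 : SubstClosure Q Δ') (h2 : SubstClosure Q Δ'')
      (hC : C ∈ Δ''.comps) (hA : SharedSyms Δ' ⊆ C)
      (hs : SubstResult Δ' Δ'' C Δs) : SubstClosure Q Δs

end Defs

section Count

variable {α : Type} [Fintype α] [DecidableEq α]

/-- `L(Σ_j)` (with `j` 0-indexed, so the paper's exponent `j+1` is `j+2`
here): all strings containing exactly one occurrence of each `σ_i ∈ Σ_j` and
exactly `j+2` occurrences of each `σ_i ∉ Σ_j`. -/
def Lword {m : ℕ} (σ : Fin m → α) (Sj : Set α) (j : ℕ) : Set (List α) :=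
  {s | ∀ i : Fin m,
    (σ i ∈ Sj → s.count (σ i) = 1) ∧ (σ i ∉ Sj → s.count (σ i) = j + 2)}

/-- The candidate counter example `L_cand = ⋃_j L(Σ_j)`, relative to an
enumeration `c` of the components and an enumeration `σ` of the alphabet. -/
def Lcand {n m : ℕ} (c : Fin n → Set α) (σ : Fin m → α) : Set (List α) :=
  ⋃ j : Fin n, Lword σ (c j) (j : ℕ)

end Count

open scoped Fin.NatCast Fin.IntCast Fin.CommRing

/-! ### Auxiliary machinery for the proof of Statement 9 -/

section ProjAux
variable {α : Type} [Fintype α] (S : Set α)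

lemma projA_nil : projA S ([] : List α) = [] := rfl

lemma projA_cons_mem {x : α} (h : x ∈ S) (l : List α) :
    projA S (x :: l) = x :: projA S l := by
  simp [projA, List.filter_cons, h]

lemma projA_cons_not_mem {x : α} (h : x ∉ S) (l : List α) :
    projA S (x :: l) = projA S l := by
  simp [projA, List.filter_cons, h]

lemma projA_append (l₁ l₂ : List α) :
    projA S (l₁ ++ l₂) = projA S l₁ ++ projA S l₂ := by
  simp [projA, List.filter_append]

lemma projA_eq_nil {l : List α} (h : ∀ x ∈ l, x ∉ S) : projA S l = [] := by
  induction l with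
  | nil => rfl
  | cons y t ih =>
    rw [projA_cons_not_mem S (h y (by simp))]
    exact ih fun x hx => h x (by simp [hx])

lemma projA_eq_self {l : List α} (h : ∀ x ∈ l, x ∈ S) : projA S l = l := by
  induction l with
  | nil => rfl
  | cons y t ih =>
    rw [projA_cons_mem S (h y (by simp))]
    rw [ih fun x hx => h x (by simp [hx])]

lemma count_projA [DecidableEq α] {x : α} (hx : x ∈ S) (l : List α) :
    (projA S l).count x = l.count x := by
  simp only [projA]
  rw [List.count_filter]
  simp [hx]

lemma count_flatMap {β : Type} [DecidableEq α] (f : β → List α) (l : List β) (x : α) :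
    ((l.flatMap f).count x) = (l.map fun b => (f b).count x).sum := by
  induction l with
  | nil => rfl
  | cons b t ih => simp [List.flatMap_cons, List.count_append, ih]

end ProjAux

/-- The count profile of the language `L(Σ_j)` on the ring. -/
def pfun (n : ℕ) [NeZero n] (j i : Fin n) : ℕ :=
  if i = j ∨ i = j + 1 then 1 else (j : ℕ) + 2

section Ring
variable {n : ℕ} (hn : 3 ≤ n)

lemma fin_cast_ne_zero [NeZero n] {t : ℕ} (ht : 0 < t) (ht' : t < n) :
    ((t : ℕ) : Fin n) ≠ 0 := by
  intro h
  have := congrArg Fin.val h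
  rw [Fin.val_cast_of_lt ht'] at this
  simp at this
  omega

include hn in
lemma ring_lemma [NeZero n] (k : Fin n → ℕ)
    (h : ∀ m : Fin n, ∃ j : Fin n, k m = pfun n j m ∧ k (m + 1) = pfun n j (m + 1))
    (hne : ∃ m, k m ≠ 1) :
    ∃ j : Fin n, ∀ i, k i = pfun n j i := by
  have h10 : (1 : Fin n) ≠ 0 := by
    have h' : ((1 : ℕ) : Fin n) ≠ 0 := fin_cast_ne_zero (by omega) (by omega)
    simpa using h'
  -- basic structural facts
  have F1 : ∀ m : Fin n, k m ≠ 1 → k (m + 1) ≠ 1 → k m = k (m + 1) := by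
    intro m hm hm1
    obtain ⟨j, hj1, hj2⟩ := h m
    unfold pfun at hj1 hj2
    split_ifs at hj1 hj2 <;> omega
  have F2 : ∀ m : Fin n, k m ≠ 1 → k (m + 1) = 1 → k m = ((m + 1 : Fin n) : ℕ) + 2 := by
    intro m hm hm1
    obtain ⟨j, hj1, hj2⟩ := h m
    unfold pfun at hj1 hj2
    rcases Classical.em (m = j ∨ m = j + 1) with hc | hc
    · rw [if_pos hc] at hj1; omega
    rw [if_neg hc] at hj1
    rcases Classical.em (m + 1 = j ∨ m + 1 = j + 1) with hd | hd
    · rcases hd with hd | hd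
      · rw [← hd] at hj1; exact hj1
      · exact absurd (Or.inl (add_right_cancel hd)) hc
    · rw [if_neg hd] at hj2; omega
  have F3 : ∀ m : Fin n, k m = 1 → k (m + 1) ≠ 1 → k (m + 1) = ((m - 1 : Fin n) : ℕ) + 2 := by
    intro m hm hm1
    obtain ⟨j, hj1, hj2⟩ := h m
    unfold pfun at hj1 hj2
    rcases Classical.em (m + 1 = j ∨ m + 1 = j + 1) with hc | hc
    · rw [if_pos hc] at hj2; omega
    rw [if_neg hc] at hj2
    rcases Classical.em (m = j ∨ m = j + 1) with hd | hd
    · rcases hd with hd | hd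
      · exact absurd (Or.inr (by rw [hd])) hc
      · have he : m - 1 = j := by rw [hd]; ring
        rw [← he] at hj2; exact hj2
    · rw [if_neg hd] at hj1; omega
  -- there is a position with value 1
  have hex1 : ∃ m : Fin n, k m = 1 := by
    by_contra hno
    push_neg at hno
    have hconst : ∀ t : ℕ, k ((t : ℕ) : Fin n) = k 0 := by
      intro t
      induction t with
      | zero => norm_num
      | succ t ih =>
        have e : (((t + 1 : ℕ)) : Fin n) = ((t : ℕ) : Fin n) + 1 := by push_cast; ring
        rw [e, ← F1 _ (hno _) (hno _), ih]
    have hconst' : ∀ m : Fin n, k m = k 0 := by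
      intro m
      have := hconst (m : ℕ)
      rwa [Fin.cast_val_eq_self] at this
    obtain ⟨j, hj1, _⟩ := h 0
    unfold pfun at hj1
    rcases Classical.em ((0 : Fin n) = j ∨ (0 : Fin n) = j + 1) with hc | hc
    · rw [if_pos hc] at hj1; exact hno 0 hj1
    rw [if_neg hc] at hj1
    obtain ⟨j', hj1', _⟩ := h j
    unfold pfun at hj1'
    rcases Classical.em (j = j' ∨ j = j' + 1) with hd | hd
    · rw [if_pos hd] at hj1'; exact hno j hj1'
    rw [if_neg hd] at hj1'
    rw [hconst' j, hj1] at hj1'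
    exact hd (Or.inl (Fin.ext (by omega)))
  -- there is a boundary m0 : k m0 ≠ 1, k (m0+1) = 1
  obtain ⟨m1, hm1⟩ := hex1
  obtain ⟨mx, hmx⟩ := hne
  have hbd : ∃ m0 : Fin n, k m0 ≠ 1 ∧ k (m0 + 1) = 1 := by
    by_contra hno
    push_neg at hno
    have hstep : ∀ t : ℕ, k (mx + (t : ℕ)) ≠ 1 := by
      intro t
      induction t with
      | zero => simpa using hmx
      | succ t ih =>
        have e : (mx + ((t + 1 : ℕ) : Fin n)) = (mx + (t : ℕ)) + 1 := by push_cast; ring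
        rw [e]; exact hno _ ih
    have h' := hstep ((m1 - mx : Fin n) : ℕ)
    rw [Fin.cast_val_eq_self] at h'
    simp at h'
    exact h' hm1
  obtain ⟨m0, hm0, hm01⟩ := hbd
  set j0 := m0 + 1 with hj0
  have hv0 : k m0 = (j0 : ℕ) + 2 := F2 m0 hm0 hm01
  -- the backwards chain
  have chain : ∀ t : ℕ, t ≤ n - 3 → k (m0 - (t : ℕ)) = (j0 : ℕ) + 2 ∧ k (m0 - (t : ℕ)) ≠ 1 := by
    intro t
    induction t with
    | zero =>
      intro _
      simp only [Nat.cast_zero, sub_zero]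
      exact ⟨hv0, by omega⟩
    | succ t ih =>
      intro ht
      obtain ⟨ihv, ihne⟩ := ih (by omega)
      have hx1 : m0 - ((t + 1 : ℕ) : Fin n) + 1 = m0 - (t : ℕ) := by push_cast; ring
      have hxne : k (m0 - ((t + 1 : ℕ) : Fin n)) ≠ 1 := by
        intro hone
        have h3 := F3 _ hone (by rw [hx1]; exact ihne)
        rw [hx1, ihv] at h3
        have hval : m0 - ((t + 1 : ℕ) : Fin n) - 1 = j0 := Fin.ext (by omega)
        rw [hj0] at hval
        have hz : ((t : ℕ) : Fin n) + 3 = 0 := by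
          push_cast at hval; linear_combination -hval
        have hz' : (((t + 3 : ℕ)) : Fin n) = 0 := by push_cast; linear_combination hz
        exact fin_cast_ne_zero (n := n) (by omega) (by omega) hz'
      constructor
      · have he := F1 _ hxne (by rw [hx1]; exact ihne)
        rw [hx1, ihv] at he; exact he
      · exact hxne
  -- k (j0 + 1) = 1
  have hj01 : k (j0 + 1) = 1 := by
    by_contra hne2
    have h3 := F3 j0 hm01 hne2
    have e1 : j0 - 1 = m0 := by rw [hj0]; ring
    rw [e1] at h3
    have hzn : ((n - 3 : ℕ) : Fin n) + 3 = 0 := by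
      have h' : (((n - 3) + 3 : ℕ) : Fin n) = 0 := by
        have hn3 : (n - 3) + 3 = n := by omega
        rw [hn3]; exact Fin.natCast_self n
      push_cast at h'; linear_combination h'
    have e2 : j0 + 1 + 1 = m0 - ((n - 3 : ℕ) : Fin n) := by
      rw [hj0]; linear_combination hzn
    have h4 := F1 (j0 + 1) hne2 (by rw [e2]; exact (chain (n - 3) le_rfl).2)
    rw [e2, (chain (n - 3) le_rfl).1, h3] at h4
    have hmj : m0 = j0 := Fin.ext (by omega)
    rw [hj0] at hmj
    exact h10 (by linear_combination -hmj)
  refine ⟨j0, fun i => ?_⟩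
  by_cases hi1 : i = j0
  · rw [hi1, hm01]
    simp [pfun]
  by_cases hi2 : i = j0 + 1
  · rw [hi2, hj01]
    simp [pfun]
  · have hne3 : ¬ (i = j0 ∨ i = j0 + 1) := by tauto
    unfold pfun; rw [if_neg hne3]
    set t := ((m0 - i : Fin n) : ℕ) with hts
    have hi : i = m0 - (t : ℕ) := by
      rw [hts, Fin.cast_val_eq_self]; ring
    have htlt : t < n := (m0 - i).isLt
    have ht3 : t ≤ n - 3 := by
      by_contra h'
      have : t = n - 2 ∨ t = n - 1 := by omega
      rcases this with h'' | h''
      · apply hi2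
        rw [hi, h'', hj0]
        have hz : ((n - 2 : ℕ) : Fin n) + 2 = 0 := by
          have h4 : (((n - 2) + 2 : ℕ) : Fin n) = 0 := by
            have e : (n - 2) + 2 = n := by omega
            rw [e]; exact Fin.natCast_self n
          push_cast at h4; linear_combination h4
        linear_combination -hz
      · apply hi1
        rw [hi, h'', hj0]
        have hz : ((n - 1 : ℕ) : Fin n) + 1 = 0 := by
          have h4 : (((n - 1) + 1 : ℕ) : Fin n) = 0 := by
            have e : (n - 1) + 1 = n := by omega
            rw [e]; exact Fin.natCast_self n
          push_cast at h4; linear_combination h4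
        linear_combination -hz
    rw [hi]
    exact (chain t ht3).1

end Ring

/-- For every `n ≥ 3`, the ring distribution
`({a_0,a_1}, {a_1,a_2}, …, {a_{n−1},a_0})` of an alphabet of `n` pairwise
distinct symbols has no reduction. -/
theorem statement_9 {α : Type} [Fintype α] (n : ℕ) (hn : 3 ≤ n)
    (a : Fin n → α) (ha : Function.Bijective a) (Δ : Distr α)
    (hΔ : Δ.comps = {S : Set α | ∃ i : Fin n,
      S = {a i, a ⟨((i : ℕ) + 1) % n, Nat.mod_lt _ (by omega)⟩}}) :
    ¬ ∃ P : Set (Distr α), IsReduction P Δ := by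
  rintro ⟨P, -, hlt, hiff⟩
  haveI : NeZero n := ⟨by omega⟩
  letI : DecidableEq α := Classical.decEq α
  set E : Fin n → Set α := fun i => {a i, a (i + 1)} with hE
  -- the ring components
  have hmk : ∀ i : Fin n,
      (⟨((i : ℕ) + 1) % n, Nat.mod_lt _ (by omega)⟩ : Fin n) = i + 1 := by
    intro i
    apply Fin.ext
    have h1 : ((1 : Fin n) : ℕ) = 1 := by
      rw [show (1 : Fin n) = ((1 : ℕ) : Fin n) by norm_cast,
        Fin.val_cast_of_lt (by omega)]
    simp [Fin.add_def, h1]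
  have hcomps : Δ.comps = Set.range E := by
    rw [hΔ]
    ext S
    constructor
    · rintro ⟨i, rfl⟩; exact ⟨i, by rw [hmk i]⟩
    · rintro ⟨i, rfl⟩; exact ⟨i, by rw [hmk i]⟩
  have hainj : Function.Injective a := ha.1
  have h2ne : ((2 : Fin n)) ≠ 0 := by
    have := fin_cast_ne_zero (n := n) (t := 2) (by omega) (by omega)
    simpa using this
  have h1ne : ((1 : Fin n)) ≠ 0 := by
    have := fin_cast_ne_zero (n := n) (t := 1) (by omega) (by omega)
    simpa using this
  have haddone : ∀ x : Fin n, x + 1 ≠ x := by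
    intro x h
    exact h1ne (by linear_combination h)
  have haddtwo : ∀ x : Fin n, x + 2 ≠ x := by
    intro x h
    exact h2ne (by linear_combination h)
  -- membership of elements in E i
  have hmemE : ∀ i : Fin n, a i ∈ E i := fun i => Or.inl rfl
  have hmemE' : ∀ i : Fin n, a (i + 1) ∈ E i := fun i => Or.inr rfl
  have hnotE : ∀ i l : Fin n, l ≠ i → l ≠ i + 1 → a l ∉ E i := by
    intro i l h1 h2 hmem
    rcases hmem with h | h
    · exact h1 (hainj h)
    · exact h2 (hainj h)
  -- Step 1: the two-letter languages are decomposable w.r.t. Δ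
  have hMdec : ∀ i : Fin n, Decomposable {[a i, a (i + 1)]} Δ := by
    intro i
    apply Set.Subset.antisymm
    · intro w hw
      simp only [Set.mem_iInter]
      intro S hS
      exact ⟨w, hw, rfl⟩
    · intro w hw
      simp only [Set.mem_iInter] at hw
      have hproj : ∀ m : Fin n, projA (E m) w = projA (E m) [a i, a (i + 1)] := by
        intro m
        obtain ⟨u, hu, he⟩ := hw (E m) (hcomps ▸ Set.mem_range_self m)
        rw [Set.mem_singleton_iff] at hu
        rw [← he, hu]
      have hel : ∀ x ∈ w, x ∈ E i := by
        intro x hx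
        obtain ⟨l, rfl⟩ := ha.2 x
        by_contra hni
        have hli : l ≠ i := fun h => hni (h ▸ hmemE i)
        have hli' : l ≠ i + 1 := fun h => hni (h ▸ hmemE' i)
        have hcnt := congrArg (List.count (a l)) (hproj l)
        rw [count_projA (E l) (hmemE l) w,
            count_projA (E l) (hmemE l) [a i, a (i + 1)]] at hcnt
        have h0 : List.count (a l) [a i, a (i + 1)] = 0 := by
          apply List.count_eq_zero.mpr
          intro hmem'
          simp only [List.mem_cons, List.not_mem_nil, or_false,
            List.mem_singleton] at hmem'
          rcases hmem' with h | h
          · exact hli (hainj h)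
          · exact hli' (hainj h)
        rw [h0] at hcnt
        exact (List.count_eq_zero.mp hcnt) hx
      have hwp : projA (E i) w = w := projA_eq_self _ hel
      have hre : projA (E i) [a i, a (i + 1)] = [a i, a (i + 1)] := by
        apply projA_eq_self
        intro x hx
        simp only [List.mem_cons, List.not_mem_nil, or_false,
          List.mem_singleton] at hx
        rcases hx with h | h
        · rw [h]; exact hmemE i
        · rw [h]; exact hmemE' i
      rw [Set.mem_singleton_iff, ← hwp, hproj i, hre]
  -- Step 2: every member of P covers every edge E i
  have hcover : ∀ Δ'' ∈ P, ∀ i : Fin n, ∃ T ∈ Δ''.comps, E i ⊆ T := by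
    intro Δ'' hmem i
    by_contra hnc
    push_neg at hnc
    have hd := (hiff _).mp (hMdec i) Δ'' hmem
    have hmem' : [a (i + 1), a i] ∈
        ⋂ S ∈ Δ''.comps, projA S ⁻¹' (projA S '' {[a i, a (i + 1)]}) := by
      simp only [Set.mem_iInter]
      intro T hT
      refine ⟨[a i, a (i + 1)], rfl, ?_⟩
      have hTne : ¬ (a i ∈ T ∧ a (i + 1) ∈ T) := by
        intro ⟨h1, h2⟩
        apply hnc T hT
        intro x hx
        rcases hx with h | h
        · rw [h]; exact h1
        · simp at h; rw [h]; exact h2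
      by_cases h1 : a i ∈ T <;> by_cases h2 : a (i + 1) ∈ T
      · exact absurd ⟨h1, h2⟩ hTne
      · rw [projA_cons_mem T h1, projA_cons_not_mem T h2,
           projA_cons_not_mem T h2, projA_cons_mem T h1, projA_nil]
      · rw [projA_cons_not_mem T h1, projA_cons_mem T h2,
           projA_cons_mem T h2, projA_cons_not_mem T h1, projA_nil]
      · rw [projA_cons_not_mem T h1, projA_cons_not_mem T h2,
           projA_cons_not_mem T h2, projA_cons_not_mem T h1]
    rw [← hd, Set.mem_singleton_iff] at hmem'
    have : a (i + 1) = a i := by injection hmem'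
    exact haddone i (hainj this)
  -- the counting language L
  set L : Set (List α) :=
    {w | ∃ j : Fin n, ∀ i : Fin n, w.count (a i) = pfun n j i} with hL
  -- the witness word: each letter exactly once
  set w1 : List α := List.ofFn a with hw1
  have hw1count : ∀ i : Fin n, w1.count (a i) = 1 := by
    intro i
    apply List.count_eq_one_of_mem
    · exact List.nodup_ofFn.mpr hainj
    · rw [List.mem_ofFn]; exact ⟨i, rfl⟩
  have hw1nL : w1 ∉ L := by
    rintro ⟨j, hj⟩
    have h1 := hj (j + 2)
    rw [hw1count] at h1
    unfold pfun at h1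
    rw [if_neg] at h1
    · omega
    · rintro (h | h)
      · exact haddtwo j h
      · exact haddone (j + 1) (by linear_combination h)
  -- Step 3: L is not decomposable w.r.t. Δ
  have hnotdec : ¬ Decomposable L Δ := by
    intro hdec
    apply hw1nL
    rw [hdec]
    simp only [Set.mem_iInter]
    intro S hS
    rw [hcomps] at hS
    obtain ⟨m, rfl⟩ := hS
    -- the witness u = w1 ++ J m
    set J : List α := (List.finRange n).flatMap
      (fun l => if l = m ∨ l = m + 1 then [] else List.replicate ((m : ℕ) + 1) (a l)) with hJ
    have hJcount : ∀ i : Fin n,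
        J.count (a i) = if i = m ∨ i = m + 1 then 0 else (m : ℕ) + 1 := by
      intro i
      rw [hJ, count_flatMap]
      rw [← Fin.sum_univ_def]
      by_cases hc : i = m ∨ i = m + 1
      · rw [if_pos hc]
        apply Finset.sum_eq_zero
        intro l _
        by_cases hl : l = m ∨ l = m + 1
        · rw [if_pos hl]; rfl
        · rw [if_neg hl, List.count_replicate, if_neg]
          intro hb
          have : a l = a i := by simpa using hb
          exact hl (hainj this ▸ hc)
      · rw [if_neg hc]
        rw [Finset.sum_eq_single i]
        · rw [if_neg hc, List.count_replicate, if_pos (by simp)]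
        · intro l _ hli
          by_cases hl : l = m ∨ l = m + 1
          · rw [if_pos hl]; rfl
          · rw [if_neg hl, List.count_replicate, if_neg]
            intro hb
            have : a l = a i := by simpa using hb
            exact hli (hainj this)
        · intro h; exact absurd (Finset.mem_univ i) h
    have hJnotmem : ∀ x ∈ J, x ∉ E m := by
      intro x hx
      rw [hJ, List.mem_flatMap] at hx
      obtain ⟨l, -, hxl⟩ := hx
      by_cases hl : l = m ∨ l = m + 1
      · rw [if_pos hl] at hxl; exact absurd hxl (List.not_mem_nil (a := x))
      · rw [if_neg hl] at hxl
        have := List.eq_of_mem_replicate hxl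
        rw [this]
        push_neg at hl
        exact hnotE m l hl.1 hl.2
    refine ⟨w1 ++ J, ⟨m, ?_⟩, ?_⟩
    · intro i
      rw [List.count_append, hw1count, hJcount]
      unfold pfun
      by_cases hc : i = m ∨ i = m + 1
      · rw [if_pos hc, if_pos hc]
      · rw [if_neg hc, if_neg hc]; omega
    · rw [projA_append, projA_eq_nil (E m) hJnotmem, List.append_nil]
  -- Step 4: L is decomposable w.r.t. every member of P
  have hdecL : ∀ Δ'' ∈ P, Decomposable L Δ'' := by
    intro Δ'' hmem
    obtain ⟨T, hT2⟩ := Classical.axiomOfChoice (hcover Δ'' hmem)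
    apply Set.Subset.antisymm
    · intro w hw
      simp only [Set.mem_iInter]
      intro S hS
      exact ⟨w, hw, rfl⟩
    · intro w hw
      simp only [Set.mem_iInter] at hw
      have hcnt : ∀ S ∈ Δ''.comps,
          ∃ j : Fin n, ∀ i : Fin n, a i ∈ S → w.count (a i) = pfun n j i := by
        intro S hS
        obtain ⟨u, ⟨j, hu⟩, he⟩ := hw S hS
        refine ⟨j, fun i hi => ?_⟩
        rw [← count_projA S hi w, ← he, count_projA S hi u, hu i]
      set k : Fin n → ℕ := fun i => w.count (a i) with hk
      have hedge : ∀ m : Fin n, ∃ j : Fin n,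
          k m = pfun n j m ∧ k (m + 1) = pfun n j (m + 1) := by
        intro m
        obtain ⟨j, hj⟩ := hcnt (T m) (hT2 m).1
        exact ⟨j, hj m ((hT2 m).2 (hmemE m)), hj (m + 1) ((hT2 m).2 (hmemE' m))⟩
      -- pigeonhole: two edges share a component
      have hTnotinj : ¬ Function.Injective T := by
        intro hinj
        have hsub : Set.range T ⊆ Δ''.comps := by
          rintro _ ⟨i, rfl⟩; exact (hT2 i).1
        have hle : (Set.range T).ncard ≤ Δ''.comps.ncard :=
          Set.ncard_le_ncard hsub (Set.toFinite _)
        have heq : (Set.range T).ncard = n := by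
          rw [← Set.image_univ, Set.ncard_image_of_injective _ hinj,
            Set.ncard_univ, Nat.card_eq_fintype_card, Fintype.card_fin]
        have hub : Δ.comps.ncard ≤ n := by
          rw [hcomps, ← Set.image_univ]
          calc (E '' Set.univ).ncard ≤ (Set.univ : Set (Fin n)).ncard :=
                Set.ncard_image_le (Set.toFinite _)
            _ = n := by rw [Set.ncard_univ, Nat.card_eq_fintype_card, Fintype.card_fin]
        have := hlt Δ'' hmem
        omega
      obtain ⟨i0, k0, hTeq, hik⟩ := Function.not_injective_iff.mp hTnotinj
      set c : Fin n := if k0 = i0 + 1 then k0 + 1 else k0 with hc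
      have hc1 : c ≠ i0 := by
        rw [hc]; split_ifs with h
        · rw [h]; intro h'; exact haddtwo i0 (by linear_combination h')
        · exact fun h' => hik h'.symm
      have hc2 : c ≠ i0 + 1 := by
        rw [hc]; split_ifs with h
        · rw [h]; exact haddone (i0 + 1)
        · exact h
      have hcmem : a c ∈ T i0 := by
        rw [hc]; split_ifs with h
        · rw [hTeq]; exact (hT2 k0).2 (hmemE' k0)
        · rw [hTeq]; exact (hT2 k0).2 (hmemE k0)
      have hne : ∃ m : Fin n, k m ≠ 1 := by
        by_contra hno
        push_neg at hno
        obtain ⟨j, hj⟩ := hcnt (T i0) (hT2 i0).1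
        have e1 := hj i0 ((hT2 i0).2 (hmemE i0))
        have e2 := hj (i0 + 1) ((hT2 i0).2 (hmemE' i0))
        have e3 := hj c hcmem
        rw [show w.count (a i0) = k i0 from rfl, hno i0] at e1
        rw [show w.count (a (i0 + 1)) = k (i0 + 1) from rfl, hno (i0 + 1)] at e2
        rw [show w.count (a c) = k c from rfl, hno c] at e3
        unfold pfun at e1 e2 e3
        split_ifs at e1 e2 e3 with h1 h2 h3 <;> try omega
        rcases h1 with h1 | h1 <;> rcases h2 with h2 | h2
        · exact haddone i0 (by linear_combination h2 - h1)
        · rcases h3 with h3 | h3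
          · exact hc1 (by linear_combination h3 - h1)
          · exact hc2 (by linear_combination h3 - h2)
        · exact haddtwo i0 (by linear_combination h2 - h1)
        · exact haddone i0 (by linear_combination h2 - h1)
      obtain ⟨j, hjall⟩ := ring_lemma hn k hedge hne
      exact ⟨j, hjall⟩
  exact hnotdec ((hiff L).mpr hdecL)
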